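/- Let X be a bounded 𝒢₁-measurable random variable with E X = 0 and Y a bounded 𝒢₂-measurable random variable. Then |E[XY]| ≤ 2 ‖X‖_{L^∞} ‖Y‖_{L^∞} φ(𝒢₁, 𝒢₂). -/

import Mathlib

set_option linter.unusedSectionVars false
set_option linter.unusedVariables false
set_option maxHeartbeats 1000000

open MeasureTheory
open scoped ENNReal

/-- The uniform (φ) mixing coefficient between two sub-σ-algebras. -/
noncomputable def phiMix {Ω : Type*} {m0 : MeasurableSpace Ω} (μ : Measure Ω)
    (G H : MeasurableSpace Ω) : ℝ :=
  sSup {x : ℝ | ∃ A B : Set Ω, MeasurableSet[G] A ∧ MeasurableSet[H] B ∧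
    0 < (μ A).toReal ∧ x = |(μ (A ∩ B)).toReal / (μ A).toReal - (μ B).toReal|}

section PhiAux

variable {Ω : Type*} {m0 : MeasurableSpace Ω} {μ : Measure Ω} [IsProbabilityMeasure μ]
  {G1 G2 : MeasurableSpace Ω}

lemma phiMix_nonneg : 0 ≤ phiMix μ G1 G2 := by
  apply Real.sSup_nonneg
  rintro x ⟨A, B, -, -, -, rfl⟩
  exact abs_nonneg _

lemma phiMix_bddAbove : BddAbove {x : ℝ | ∃ A B : Set Ω, MeasurableSet[G1] A ∧
    MeasurableSet[G2] B ∧ 0 < (μ A).toReal ∧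
    x = |(μ (A ∩ B)).toReal / (μ A).toReal - (μ B).toReal|} := by
  refine ⟨1, ?_⟩
  rintro x ⟨A, B, -, -, hA, rfl⟩
  have h1 : (μ (A ∩ B)).toReal / (μ A).toReal ≤ 1 := by
    apply div_le_one_of_le₀ _ hA.le
    exact ENNReal.toReal_mono (measure_ne_top μ A) (measure_mono Set.inter_subset_left)
  have h2 : (μ B).toReal ≤ 1 := by
    simpa using ENNReal.toReal_mono (by simp) (prob_le_one (μ := μ) (s := B))
  have h3 : 0 ≤ (μ (A ∩ B)).toReal / (μ A).toReal := by positivity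
  have h4 : 0 ≤ (μ B).toReal := ENNReal.toReal_nonneg
  rw [abs_le]; constructor <;> nlinarith

lemma phiMix_abs_le {A B : Set Ω} (hA : MeasurableSet[G1] A) (hB : MeasurableSet[G2] B) :
    |(μ (A ∩ B)).toReal - (μ A).toReal * (μ B).toReal| ≤ phiMix μ G1 G2 * (μ A).toReal := by
  rcases eq_or_lt_of_le (ENNReal.toReal_nonneg (a := μ A)) with h0 | hpos
  · have hA0 : μ A = 0 := by
      have := measure_ne_top μ A
      simpa [ENNReal.toReal_eq_zero_iff, this] using h0.symm
    have hAB0 : μ (A ∩ B) = 0 := measure_mono_null Set.inter_subset_left hA0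
    simp [hA0, hAB0]
  · have hmem : |(μ (A ∩ B)).toReal / (μ A).toReal - (μ B).toReal| ≤ phiMix μ G1 G2 :=
      le_csSup phiMix_bddAbove ⟨A, B, hA, hB, hpos, rfl⟩
    have := mul_le_mul_of_nonneg_right hmem hpos.le
    calc |(μ (A ∩ B)).toReal - (μ A).toReal * (μ B).toReal|
        = |(μ (A ∩ B)).toReal / (μ A).toReal - (μ B).toReal| * (μ A).toReal := by
          rw [← abs_of_pos hpos, ← abs_mul]
          congr 1
          rw [abs_of_pos hpos, sub_mul, div_mul_cancel₀ _ hpos.ne']; ring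
      _ ≤ phiMix μ G1 G2 * (μ A).toReal := this

end PhiAux

section BddAux
variable {Ω : Type*} [m0 : MeasurableSpace Ω] {μ : Measure Ω} [IsProbabilityMeasure μ]

lemma integrable_of_bdd {f : Ω → ℝ} (hf : Measurable f) {C : ℝ} (h : ∀ ω, |f ω| ≤ C) :
    Integrable f μ :=
  (integrable_const C).mono' hf.aestronglyMeasurable (Filter.Eventually.of_forall (by simpa using h))

lemma memLtop_ae_bound {f : Ω → ℝ} (hf : MemLp f ⊤ μ) :
    ∀ᵐ ω ∂μ, |f ω| ≤ (eLpNorm f ⊤ μ).toReal := by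
  have h1 : ∀ᵐ ω ∂μ, (‖f ω‖₊ : ℝ≥0∞) ≤ eLpNormEssSup f μ := enorm_ae_le_eLpNormEssSup f μ
  have hfin : eLpNormEssSup f μ ≠ ⊤ := by
    have := hf.2; rwa [eLpNorm_exponent_top, lt_top_iff_ne_top] at this
  filter_upwards [h1] with ω hω
  have := ENNReal.toReal_mono hfin hω
  simpa [eLpNorm_exponent_top, Real.norm_eq_abs] using this

lemma setIntegral_bound {A : Set Ω} (hA : MeasurableSet A)
    {Y : Ω → ℝ} (hYm : Measurable Y) {M c : ℝ} (hc : 0 ≤ c) (hM : 0 ≤ M)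
    (hY0 : ∀ ω, 0 ≤ Y ω) (hYM : ∀ ω, Y ω ≤ M)
    (hAB : ∀ t : ℝ, |(μ (A ∩ {a | t < Y a})).toReal
        - (μ A).toReal * (μ {a | t < Y a}).toReal| ≤ c * (μ A).toReal) :
    |∫ ω in A, Y ω ∂μ - (μ A).toReal * ∫ ω, Y ω ∂μ| ≤ c * M * (μ A).toReal := by
  have hYabs : ∀ ω, |Y ω| ≤ M := fun ω => by
    rw [abs_of_nonneg (hY0 ω)]; exact hYM ω
  have hInt : Integrable Y μ := integrable_of_bdd hYm hYabs
  have hIntA : Integrable Y (μ.restrict A) := hInt.restrict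
  have hBtm : ∀ t : ℝ, MeasurableSet {a | t < Y a} := fun t =>
    measurableSet_lt measurable_const hYm
  have LC1 : ∫ ω in A, Y ω ∂μ
      = ∫ t in Set.Ioi (0:ℝ), (μ (A ∩ {a | t < Y a})).toReal := by
    rw [hIntA.integral_eq_integral_meas_lt (Filter.Eventually.of_forall hY0)]
    refine integral_congr_ae (Filter.Eventually.of_forall fun t => ?_)
    simp only [Measure.real, Measure.restrict_apply (hBtm t), Set.inter_comm]
  have LC2 : ∫ ω, Y ω ∂μ = ∫ t in Set.Ioi (0:ℝ), (μ {a | t < Y a}).toReal :=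
    hInt.integral_eq_integral_meas_lt (Filter.Eventually.of_forall hY0)
  set F : ℝ → ℝ := fun t => (μ (A ∩ {a | t < Y a})).toReal with hF
  set H : ℝ → ℝ := fun t => (μ {a | t < Y a}).toReal with hH
  have hempty : ∀ t : ℝ, M < t → {a | t < Y a} = ∅ := fun t ht => by
    ext a; simp only [Set.mem_setOf_eq, Set.mem_empty_iff_false, iff_false, not_lt]
    exact (hYM a).trans ht.le
  have hle1 : ∀ s : Set Ω, (μ s).toReal ≤ 1 := fun s => by
    have := prob_le_one (μ := μ) (s := s)
    simpa using ENNReal.toReal_mono (by simp) this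
  have hmeasH : Measurable H := by
    apply Measurable.ennreal_toReal
    exact Antitone.measurable fun s t hst => measure_mono fun a ha => lt_of_le_of_lt hst ha
  have hmeasF : Measurable F := by
    apply Measurable.ennreal_toReal
    exact Antitone.measurable fun s t hst =>
      measure_mono fun a ha => ⟨ha.1, lt_of_le_of_lt hst ha.2⟩
  have hg : Integrable ((Set.Ioc (0:ℝ) M).indicator fun _ => (1:ℝ))
      (volume.restrict (Set.Ioi 0)) := by
    apply Integrable.restrict
    rw [integrable_indicator_iff measurableSet_Ioc]
    exact (integrableOn_const_iff).mpr (Or.inr measure_Ioc_lt_top)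
  have hbound : ∀ (f : ℝ → ℝ), Measurable f → (∀ t, 0 ≤ f t) → (∀ t, f t ≤ 1) →
      (∀ t, M < t → f t = 0) → Integrable f (volume.restrict (Set.Ioi 0)) := by
    intro f hf h0 h1 hv
    refine hg.mono' (hf.aestronglyMeasurable) ?_
    rw [ae_restrict_iff' measurableSet_Ioi]
    refine Filter.Eventually.of_forall fun t ht => ?_
    rw [Real.norm_eq_abs, abs_of_nonneg (h0 t)]
    by_cases htM : t ≤ M
    · rw [Set.indicator_of_mem (Set.mem_Ioc.mpr ⟨ht, htM⟩)]; exact h1 t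
    · rw [hv t (not_le.mp htM), Set.indicator_of_notMem (fun h => htM h.2)]
  have hIF : Integrable F (volume.restrict (Set.Ioi 0)) :=
    hbound F hmeasF (fun t => ENNReal.toReal_nonneg) (fun t => hle1 _)
      (fun t ht => by simp [hF, hempty t ht])
  have hIH : Integrable H (volume.restrict (Set.Ioi 0)) :=
    hbound H hmeasH (fun t => ENNReal.toReal_nonneg) (fun t => hle1 _)
      (fun t ht => by simp [hH, hempty t ht])
  have key : ∫ ω in A, Y ω ∂μ - (μ A).toReal * ∫ ω, Y ω ∂μ
      = ∫ t in Set.Ioi (0:ℝ), (F t - (μ A).toReal * H t) := by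
    rw [LC1, LC2, ← integral_const_mul, ← integral_sub hIF (hIH.const_mul _)]
  rw [key]
  have habs : |∫ t in Set.Ioi (0:ℝ), (F t - (μ A).toReal * H t)|
      ≤ ∫ t in Set.Ioi (0:ℝ), |F t - (μ A).toReal * H t| := by
    simpa [Real.norm_eq_abs] using
      norm_integral_le_integral_norm (μ := volume.restrict (Set.Ioi 0))
        (fun t => F t - (μ A).toReal * H t)
  refine habs.trans ?_
  have hmono : ∫ t in Set.Ioi (0:ℝ), |F t - (μ A).toReal * H t|
      ≤ ∫ t in Set.Ioi (0:ℝ),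
        (Set.Ioc (0:ℝ) M).indicator (fun _ => c * (μ A).toReal) t := by
    refine integral_mono_ae ((hIF.sub (hIH.const_mul _)).abs) ?_ ?_
    · refine (hg.const_mul (c * (μ A).toReal)).congr <| Filter.Eventually.of_forall fun t => ?_
      by_cases h : t ∈ Set.Ioc (0:ℝ) M <;>
        simp [Set.indicator_of_mem, Set.indicator_of_notMem, h, mul_comm]
    · refine (ae_restrict_iff' measurableSet_Ioi).mpr ?_
      refine Filter.Eventually.of_forall fun t ht => ?_
      by_cases htM : t ≤ M
      · rw [Set.indicator_of_mem (Set.mem_Ioc.mpr ⟨ht, htM⟩)]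
        exact hAB t
      · have he := hempty t (not_le.mp htM)
        simp only [Set.indicator_of_notMem (fun h : t ∈ Set.Ioc 0 M => htM h.2)]
        simp [hF, hH, he]
  refine hmono.trans ?_
  rw [integral_indicator measurableSet_Ioc, Measure.restrict_restrict measurableSet_Ioc,
    Set.inter_eq_self_of_subset_left Set.Ioc_subset_Ioi_self, setIntegral_const,
    Real.volume_real_Ioc_of_le hM, smul_eq_mul]
  nlinarith [ENNReal.toReal_nonneg (a := μ A)]

lemma mul_integral_eq {Z Y : Ω → ℝ} (hZm : Measurable Z) (hYm : Measurable Y)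
    {K M : ℝ} (hK : 0 ≤ K) (hM : 0 ≤ M)
    (hZ0 : ∀ ω, 0 ≤ Z ω) (hZK : ∀ ω, Z ω ≤ K) (hYabs : ∀ ω, |Y ω| ≤ M) :
    ∫ ω, Z ω * Y ω ∂μ
      = ∫ t in Set.Ioi (0:ℝ), (∫ ω in {a | t < Z a}, Y ω ∂μ) := by
  set ν := volume.restrict (Set.Ioi (0:ℝ)) with hν
  set f : Ω → ℝ → ℝ := fun ω => (Set.Iio (Z ω)).indicator (fun _ => Y ω) with hf
  have hSm : MeasurableSet {p : Ω × ℝ | p.2 < Z p.1} :=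
    measurableSet_lt measurable_snd (hZm.comp measurable_fst)
  have huncurry : Function.uncurry f
      = {p : Ω × ℝ | p.2 < Z p.1}.indicator (fun p => Y p.1) := by
    funext p
    simp only [Function.uncurry, hf, Set.indicator_apply, Set.mem_Iio, Set.mem_setOf_eq]
  have hmeasF : Measurable (Function.uncurry f) := by
    rw [huncurry]
    exact (hYm.comp measurable_fst).indicator hSm
  have hIf : Integrable (Function.uncurry f) (μ.prod ν) := by
    have hS' : MeasurableSet ((Set.univ : Set Ω) ×ˢ Set.Iic K) :=
      MeasurableSet.univ.prod measurableSet_Iic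
    have hfin : (μ.prod ν) ((Set.univ : Set Ω) ×ˢ Set.Iic K) < ⊤ := by
      rw [Measure.prod_prod, hν, Measure.restrict_apply measurableSet_Iic]
      have : Set.Iic K ∩ Set.Ioi (0:ℝ) = Set.Ioc 0 K := by
        ext x; simp [and_comm]
      rw [this]
      exact ENNReal.mul_lt_top (measure_lt_top μ _) measure_Ioc_lt_top
    have hg : Integrable (((Set.univ : Set Ω) ×ˢ Set.Iic K).indicator fun _ => M)
        (μ.prod ν) := by
      rw [integrable_indicator_iff hS']
      exact (integrableOn_const_iff).mpr (Or.inr hfin)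
    refine hg.mono' hmeasF.aestronglyMeasurable (Filter.Eventually.of_forall fun p => ?_)
    rw [huncurry]
    by_cases hp : p ∈ {p : Ω × ℝ | p.2 < Z p.1}
    · rw [Set.indicator_of_mem hp]
      have hpS : p ∈ (Set.univ : Set Ω) ×ˢ Set.Iic K :=
        ⟨Set.mem_univ _, le_trans (le_of_lt hp) (hZK p.1)⟩
      rw [Set.indicator_of_mem hpS]
      simpa [Real.norm_eq_abs] using hYabs p.1
    · rw [Set.indicator_of_notMem hp]
      simp only [norm_zero]
      exact Set.indicator_nonneg (fun _ _ => hM) _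
  have hswap := integral_integral_swap (f := f) hIf
  have hinner : ∀ ω, ∫ t, f ω t ∂ν = Z ω * Y ω := by
    intro ω
    rw [hf]
    simp only []
    rw [integral_indicator measurableSet_Iio, hν, Measure.restrict_restrict measurableSet_Iio,
      setIntegral_const]
    have : Set.Iio (Z ω) ∩ Set.Ioi (0:ℝ) = Set.Ioo 0 (Z ω) := by
      ext x; simp [Set.mem_Ioo, and_comm]
    rw [this, Real.volume_real_Ioo_of_le (hZ0 ω), smul_eq_mul, sub_zero, mul_comm]
  have houter : ∀ t, ∫ ω, f ω t ∂μ = ∫ ω in {a | t < Z a}, Y ω ∂μ := by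
    intro t
    have : (fun ω => f ω t) = {a | t < Z a}.indicator Y := by
      funext ω
      simp only [hf, Set.indicator_apply, Set.mem_Iio, Set.mem_setOf_eq]
    rw [this, integral_indicator (measurableSet_lt measurable_const hZm)]
  calc ∫ ω, Z ω * Y ω ∂μ = ∫ ω, ∫ t, f ω t ∂ν ∂μ := by
        refine integral_congr_ae (Filter.Eventually.of_forall fun ω => ?_)
        exact (hinner ω).symm
    _ = ∫ t, ∫ ω, f ω t ∂μ ∂ν := hswap
    _ = ∫ t in Set.Ioi (0:ℝ), (∫ ω in {a | t < Z a}, Y ω ∂μ) := by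
        refine integral_congr_ae (Filter.Eventually.of_forall fun t => ?_)
        exact houter t

lemma outer_bound {Z Y : Ω → ℝ} (hZm : Measurable Z) (hYm : Measurable Y)
    {K M c : ℝ} (hc : 0 ≤ c) (hK : 0 ≤ K) (hM : 0 ≤ M)
    (hZ0 : ∀ ω, 0 ≤ Z ω) (hZK : ∀ ω, Z ω ≤ K) (hYabs : ∀ ω, |Y ω| ≤ M)
    (hset : ∀ t : ℝ, |∫ ω in {a | t < Z a}, Y ω ∂μ
        - (μ {a | t < Z a}).toReal * ∫ ω, Y ω ∂μ| ≤ c * (μ {a | t < Z a}).toReal) :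
    |∫ ω, Z ω * Y ω ∂μ - (∫ ω, Z ω ∂μ) * ∫ ω, Y ω ∂μ| ≤ c * ∫ ω, Z ω ∂μ := by
  have hZabs : ∀ ω, |Z ω| ≤ K := fun ω => by
    rw [abs_of_nonneg (hZ0 ω)]; exact hZK ω
  have hIntZ : Integrable Z μ := integrable_of_bdd hZm hZabs
  have hIntY : Integrable Y μ := integrable_of_bdd hYm hYabs
  have hBtm : ∀ t : ℝ, MeasurableSet {a | t < Z a} := fun t =>
    measurableSet_lt measurable_const hZm
  set H : ℝ → ℝ := fun t => (μ {a | t < Z a}).toReal with hH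
  set G : ℝ → ℝ := fun t => ∫ ω in {a | t < Z a}, Y ω ∂μ with hG
  have LCZ : ∫ ω, Z ω ∂μ = ∫ t in Set.Ioi (0:ℝ), H t :=
    hIntZ.integral_eq_integral_meas_lt (Filter.Eventually.of_forall hZ0)
  have LCZY : ∫ ω, Z ω * Y ω ∂μ = ∫ t in Set.Ioi (0:ℝ), G t :=
    mul_integral_eq hZm hYm hK hM hZ0 hZK hYabs
  have hempty : ∀ t : ℝ, K < t → {a | t < Z a} = ∅ := fun t ht => by
    ext a; simp only [Set.mem_setOf_eq, Set.mem_empty_iff_false, iff_false, not_lt]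
    exact (hZK a).trans ht.le
  have hle1 : ∀ s : Set Ω, (μ s).toReal ≤ 1 := fun s => by
    have := prob_le_one (μ := μ) (s := s)
    simpa using ENNReal.toReal_mono (by simp) this
  have hmeasH : Measurable H := by
    apply Measurable.ennreal_toReal
    exact Antitone.measurable fun s t hst => measure_mono fun a ha => lt_of_le_of_lt hst ha
  -- measurability of G via antitone pieces
  have hmeasG : Measurable G := by
    have hYp : Integrable (fun ω => max (Y ω) 0) μ := hIntY.pos_part
    have hYn : Integrable (fun ω => max (-Y ω) 0) μ := hIntY.neg.pos_part
    have hanti : ∀ (W : Ω → ℝ), Integrable W μ → (∀ ω, 0 ≤ W ω) →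
        Antitone (fun t => ∫ ω in {a | t < Z a}, W ω ∂μ) := by
      intro W hW hW0 s t hst
      apply setIntegral_mono_set hW.integrableOn (Filter.Eventually.of_forall hW0)
      exact Filter.Eventually.of_forall fun a ha => lt_of_le_of_lt hst ha
    have hGeq : G = fun t => (∫ ω in {a | t < Z a}, max (Y ω) 0 ∂μ)
        - ∫ ω in {a | t < Z a}, max (-Y ω) 0 ∂μ := by
      funext t
      rw [hG, ← integral_sub hYp.integrableOn hYn.integrableOn]
      refine integral_congr_ae (Filter.Eventually.of_forall fun ω => ?_)
      simp only [max_def]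
      split_ifs <;> simp <;> linarith
    rw [hGeq]
    exact ((hanti _ hYp (fun ω => le_max_right _ _)).measurable).sub
      ((hanti _ hYn (fun ω => le_max_right _ _)).measurable)
  have hGbd : ∀ t : ℝ, |G t| ≤ M * H t := by
    intro t
    have h0 : |G t| ≤ ∫ ω in {a | t < Z a}, ‖Y ω‖ ∂μ := by
      simpa [Real.norm_eq_abs] using
        norm_integral_le_integral_norm (μ := μ.restrict {a | t < Z a}) Y
    have h1 : ∫ ω in {a | t < Z a}, ‖Y ω‖ ∂μ ≤ ∫ ω in {a | t < Z a}, M ∂μ := by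
      refine integral_mono_ae (hIntY.norm.integrableOn) (integrable_const M).integrableOn ?_
      exact Filter.Eventually.of_forall fun ω => by simpa [Real.norm_eq_abs] using hYabs ω
    have h2 := h0.trans h1
    rw [setIntegral_const, smul_eq_mul, mul_comm] at h2
    exact h2
  have hg : ∀ C : ℝ, Integrable ((Set.Ioc (0:ℝ) K).indicator fun _ => C)
      (volume.restrict (Set.Ioi 0)) := by
    intro C
    apply Integrable.restrict
    rw [integrable_indicator_iff measurableSet_Ioc]
    exact (integrableOn_const_iff).mpr (Or.inr measure_Ioc_lt_top)
  have hbound : ∀ (f : ℝ → ℝ) (C : ℝ), Measurable f → (∀ t, |f t| ≤ C) →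
      (∀ t, K < t → f t = 0) → Integrable f (volume.restrict (Set.Ioi 0)) := by
    intro f C hf h1 hv
    refine (hg C).mono' (hf.aestronglyMeasurable) ?_
    rw [ae_restrict_iff' measurableSet_Ioi]
    refine Filter.Eventually.of_forall fun t ht => ?_
    rw [Real.norm_eq_abs]
    by_cases htK : t ≤ K
    · rw [Set.indicator_of_mem (Set.mem_Ioc.mpr ⟨ht, htK⟩)]; exact h1 t
    · rw [hv t (not_le.mp htK), abs_zero, Set.indicator_of_notMem (fun h => htK h.2)]
  have hIH : Integrable H (volume.restrict (Set.Ioi 0)) :=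
    hbound H 1 hmeasH (fun t => by rw [abs_of_nonneg ENNReal.toReal_nonneg]; exact hle1 _)
      (fun t ht => by simp [hH, hempty t ht])
  have hIG : Integrable G (volume.restrict (Set.Ioi 0)) := by
    refine hbound G M hmeasG (fun t => ?_) (fun t ht => by simp [hG, hempty t ht])
    have h1 := hGbd t
    have h2 := hle1 {a | t < Z a}
    have h3 : (0:ℝ) ≤ H t := ENNReal.toReal_nonneg
    have h4 : H t = (μ {a | t < Z a}).toReal := rfl
    nlinarith
  have key : ∫ ω, Z ω * Y ω ∂μ - (∫ ω, Z ω ∂μ) * ∫ ω, Y ω ∂μ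
      = ∫ t in Set.Ioi (0:ℝ), (G t - H t * ∫ ω, Y ω ∂μ) := by
    rw [LCZY, LCZ, ← integral_mul_const, ← integral_sub hIG (hIH.mul_const _)]
  rw [key]
  have habs : |∫ t in Set.Ioi (0:ℝ), (G t - H t * ∫ ω, Y ω ∂μ)|
      ≤ ∫ t in Set.Ioi (0:ℝ), |G t - H t * ∫ ω, Y ω ∂μ| := by
    simpa [Real.norm_eq_abs] using
      norm_integral_le_integral_norm (μ := volume.restrict (Set.Ioi 0))
        (fun t => G t - H t * ∫ ω, Y ω ∂μ)
  refine habs.trans ?_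
  have hmono : ∫ t in Set.Ioi (0:ℝ), |G t - H t * ∫ ω, Y ω ∂μ|
      ≤ ∫ t in Set.Ioi (0:ℝ), c * H t := by
    refine integral_mono_ae ((hIG.sub (hIH.mul_const _)).abs) (hIH.const_mul c) ?_
    exact Filter.Eventually.of_forall fun t => hset t
  refine hmono.trans ?_
  rw [integral_const_mul, ← LCZ]

lemma setIntegral_bound_signed {G1 G2 : MeasurableSpace Ω} (hG2 : G2 ≤ m0)
    {A : Set Ω} (hAm : MeasurableSet[m0] A) (hA : MeasurableSet[G1] A)
    {Y : Ω → ℝ} (hY : Measurable[G2] Y) {M : ℝ} (hM : 0 ≤ M)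
    (hYabs : ∀ ω, |Y ω| ≤ M) :
    |∫ ω in A, Y ω ∂μ - (μ A).toReal * ∫ ω, Y ω ∂μ|
      ≤ 2 * phiMix μ G1 G2 * M * (μ A).toReal := by
  set φ := phiMix μ G1 G2 with hφ
  have hφ0 : 0 ≤ φ := phiMix_nonneg
  set Yp : Ω → ℝ := fun ω => max (Y ω) 0 with hYp
  set Yn : Ω → ℝ := fun ω => max (-Y ω) 0 with hYn
  have hYpG2 : Measurable[G2] Yp := Measurable.max hY (@measurable_const _ _ _ G2 0)
  have hYnG2 : Measurable[G2] Yn := Measurable.max (Measurable.neg hY) (@measurable_const _ _ _ G2 0)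
  have hYpm : Measurable[m0] Yp := hYpG2.mono hG2 le_rfl
  have hYnm : Measurable[m0] Yn := hYnG2.mono hG2 le_rfl
  have hYm : Measurable[m0] Y := hY.mono hG2 le_rfl
  have hYp0 : ∀ ω, 0 ≤ Yp ω := fun ω => le_max_right _ _
  have hYn0 : ∀ ω, 0 ≤ Yn ω := fun ω => le_max_right _ _
  have hYpM : ∀ ω, Yp ω ≤ M := fun ω => max_le (le_of_abs_le (hYabs ω)) hM
  have hYnM : ∀ ω, Yn ω ≤ M := fun ω => max_le (by
      have := neg_abs_le (Y ω); have := hYabs ω; linarith) hM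
  have hABp : ∀ t : ℝ, |(μ (A ∩ {a | t < Yp a})).toReal
      - (μ A).toReal * (μ {a | t < Yp a}).toReal| ≤ φ * (μ A).toReal := fun t =>
    phiMix_abs_le (m0 := m0) (μ := μ) hA (measurableSet_lt (@measurable_const _ _ _ G2 t) hYpG2)
  have hABn : ∀ t : ℝ, |(μ (A ∩ {a | t < Yn a})).toReal
      - (μ A).toReal * (μ {a | t < Yn a}).toReal| ≤ φ * (μ A).toReal := fun t =>
    phiMix_abs_le (m0 := m0) (μ := μ) hA (measurableSet_lt (@measurable_const _ _ _ G2 t) hYnG2)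
  have h1 := setIntegral_bound (m0 := m0) (μ := μ) hAm hYpm hφ0 hM hYp0 hYpM hABp
  have h2 := setIntegral_bound (m0 := m0) (μ := μ) hAm hYnm hφ0 hM hYn0 hYnM hABn
  have hIp : Integrable Yp μ := integrable_of_bdd (m0 := m0) (μ := μ) hYpm
    (fun ω => by rw [abs_of_nonneg (hYp0 ω)]; exact hYpM ω)
  have hIn : Integrable Yn μ := integrable_of_bdd (m0 := m0) (μ := μ) hYnm
    (fun ω => by rw [abs_of_nonneg (hYn0 ω)]; exact hYnM ω)
  have hYsub : ∀ ω, Y ω = Yp ω - Yn ω := fun ω => by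
    simp only [hYp, hYn, max_def]
    split_ifs <;> simp <;> linarith
  have e1 : ∫ ω in A, Y ω ∂μ = (∫ ω in A, Yp ω ∂μ) - ∫ ω in A, Yn ω ∂μ := by
    rw [← integral_sub (Integrable.restrict hIp (s := A)) (Integrable.restrict hIn (s := A))]
    exact integral_congr_ae (Filter.Eventually.of_forall fun ω => hYsub ω)
  have e2 : ∫ ω, Y ω ∂μ = (∫ ω, Yp ω ∂μ) - ∫ ω, Yn ω ∂μ := by
    rw [← integral_sub hIp hIn]
    exact integral_congr_ae (Filter.Eventually.of_forall fun ω => hYsub ω)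
  rw [e1, e2]
  have := abs_sub (∫ ω in A, Yp ω ∂μ - (μ A).toReal * ∫ ω, Yp ω ∂μ)
    (∫ ω in A, Yn ω ∂μ - (μ A).toReal * ∫ ω, Yn ω ∂μ)
  calc |(∫ ω in A, Yp ω ∂μ) - ∫ ω in A, Yn ω ∂μ
        - (μ A).toReal * ((∫ ω, Yp ω ∂μ) - ∫ ω, Yn ω ∂μ)|
      = |(∫ ω in A, Yp ω ∂μ - (μ A).toReal * ∫ ω, Yp ω ∂μ)
        - (∫ ω in A, Yn ω ∂μ - (μ A).toReal * ∫ ω, Yn ω ∂μ)| := by ring_nf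
    _ ≤ |∫ ω in A, Yp ω ∂μ - (μ A).toReal * ∫ ω, Yp ω ∂μ|
        + |∫ ω in A, Yn ω ∂μ - (μ A).toReal * ∫ ω, Yn ω ∂μ| := abs_sub _ _
    _ ≤ φ * M * (μ A).toReal + φ * M * (μ A).toReal := add_le_add h1 h2
    _ = 2 * φ * M * (μ A).toReal := by ring

end BddAux

theorem stmt4 {Ω : Type*} [m0 : MeasurableSpace Ω] (μ : Measure Ω) [IsProbabilityMeasure μ]
    (G1 G2 : MeasurableSpace Ω) (hG1 : G1 ≤ m0) (hG2 : G2 ≤ m0)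
    (X Y : Ω → ℝ) (hX : Measurable[G1] X) (hY : Measurable[G2] Y)
    (hXb : MemLp X ⊤ μ) (hYb : MemLp Y ⊤ μ)
    (hmean : ∫ ω, X ω ∂μ = 0) :
    |∫ ω, X ω * Y ω ∂μ| ≤
      2 * (eLpNorm X ⊤ μ).toReal * (eLpNorm Y ⊤ μ).toReal * phiMix μ G1 G2 := by
  set K := (eLpNorm X ⊤ μ).toReal with hKdef
  set M := (eLpNorm Y ⊤ μ).toReal with hMdef
  set φ := phiMix μ G1 G2 with hφdef
  have hφ0 : 0 ≤ φ := phiMix_nonneg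
  have hK0 : 0 ≤ K := ENNReal.toReal_nonneg
  have hM0 : 0 ≤ M := ENNReal.toReal_nonneg
  have haeX : ∀ᵐ ω ∂μ, |X ω| ≤ K := memLtop_ae_bound (m0 := m0) hXb
  have haeY : ∀ᵐ ω ∂μ, |Y ω| ≤ M := memLtop_ae_bound (m0 := m0) hYb
  set X' : Ω → ℝ := fun ω => max (min (X ω) K) (-K) with hX'def
  set Y' : Ω → ℝ := fun ω => max (min (Y ω) M) (-M) with hY'def
  have hX'G1 : Measurable[G1] X' :=
    Measurable.max (Measurable.min hX (@measurable_const _ _ _ G1 K))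
      (@measurable_const _ _ _ G1 (-K))
  have hY'G2 : Measurable[G2] Y' :=
    Measurable.max (Measurable.min hY (@measurable_const _ _ _ G2 M))
      (@measurable_const _ _ _ G2 (-M))
  have hX'm : Measurable[m0] X' := hX'G1.mono hG1 le_rfl
  have hY'm : Measurable[m0] Y' := hY'G2.mono hG2 le_rfl
  have hX'bd : ∀ ω, |X' ω| ≤ K := fun ω => abs_le.mpr
    ⟨le_max_right _ _, max_le (min_le_right _ _) (by linarith)⟩
  have hY'bd : ∀ ω, |Y' ω| ≤ M := fun ω => abs_le.mpr
    ⟨le_max_right _ _, max_le (min_le_right _ _) (by linarith)⟩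
  have hX'ae : X' =ᵐ[μ] X := by
    filter_upwards [haeX] with ω h
    rcases abs_le.mp h with ⟨h1, h2⟩
    rw [hX'def]
    simp only []
    rw [min_eq_left h2, max_eq_left h1]
  have hY'ae : Y' =ᵐ[μ] Y := by
    filter_upwards [haeY] with ω h
    rcases abs_le.mp h with ⟨h1, h2⟩
    rw [hY'def]
    simp only []
    rw [min_eq_left h2, max_eq_left h1]
  have hmean' : ∫ ω, X' ω ∂μ = 0 := by
    rw [integral_congr_ae hX'ae]; exact hmean
  have hprod : ∫ ω, X ω * Y ω ∂μ = ∫ ω, X' ω * Y' ω ∂μ := by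
    refine integral_congr_ae ?_
    filter_upwards [hX'ae, hY'ae] with ω h1 h2
    rw [h1, h2]
  set Z1 : Ω → ℝ := fun ω => max (X' ω) 0 with hZ1def
  set Z2 : Ω → ℝ := fun ω => max (-X' ω) 0 with hZ2def
  have hZ1G1 : Measurable[G1] Z1 := Measurable.max hX'G1 (@measurable_const _ _ _ G1 0)
  have hZ2G1 : Measurable[G1] Z2 := Measurable.max hX'G1.neg (@measurable_const _ _ _ G1 0)
  have hZ1m : Measurable[m0] Z1 := hZ1G1.mono hG1 le_rfl
  have hZ2m : Measurable[m0] Z2 := hZ2G1.mono hG1 le_rfl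
  have hZ10 : ∀ ω, 0 ≤ Z1 ω := fun ω => le_max_right _ _
  have hZ20 : ∀ ω, 0 ≤ Z2 ω := fun ω => le_max_right _ _
  have hZ1K : ∀ ω, Z1 ω ≤ K := fun ω => max_le (le_of_abs_le (hX'bd ω)) hK0
  have hZ2K : ∀ ω, Z2 ω ≤ K := fun ω => max_le (by
    have := neg_abs_le (X' ω); have := hX'bd ω; linarith) hK0
  have hsub : ∀ ω, X' ω = Z1 ω - Z2 ω := fun ω => by
    rw [hZ1def, hZ2def]
    simp only [max_def]
    split_ifs <;> simp <;> linarith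
  have IZ1 : Integrable Z1 μ := integrable_of_bdd (m0 := m0) (μ := μ) hZ1m
    (fun ω => by rw [abs_of_nonneg (hZ10 ω)]; exact hZ1K ω)
  have IZ2 : Integrable Z2 μ := integrable_of_bdd (m0 := m0) (μ := μ) hZ2m
    (fun ω => by rw [abs_of_nonneg (hZ20 ω)]; exact hZ2K ω)
  have IX' : Integrable X' μ := integrable_of_bdd (m0 := m0) (μ := μ) hX'm hX'bd
  have IY' : Integrable Y' μ := integrable_of_bdd (m0 := m0) (μ := μ) hY'm hY'bd
  have hZsum : ∫ ω, Z1 ω ∂μ - ∫ ω, Z2 ω ∂μ = 0 := by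
    rw [← integral_sub IZ1 IZ2]
    rw [← hmean']
    exact integral_congr_ae (Filter.Eventually.of_forall fun ω => (hsub ω).symm)
  have hset1 : ∀ t : ℝ, |∫ ω in {a | t < Z1 a}, Y' ω ∂μ
      - (μ {a | t < Z1 a}).toReal * ∫ ω, Y' ω ∂μ|
      ≤ (2 * φ * M) * (μ {a | t < Z1 a}).toReal := fun t => by
    have hA : MeasurableSet[G1] {a | t < Z1 a} :=
      measurableSet_lt (@measurable_const _ _ _ G1 t) hZ1G1
    exact setIntegral_bound_signed (m0 := m0) (μ := μ) hG2 (hG1 _ hA) hA hY'G2 hM0 hY'bd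
  have hset2 : ∀ t : ℝ, |∫ ω in {a | t < Z2 a}, Y' ω ∂μ
      - (μ {a | t < Z2 a}).toReal * ∫ ω, Y' ω ∂μ|
      ≤ (2 * φ * M) * (μ {a | t < Z2 a}).toReal := fun t => by
    have hA : MeasurableSet[G1] {a | t < Z2 a} :=
      measurableSet_lt (@measurable_const _ _ _ G1 t) hZ2G1
    exact setIntegral_bound_signed (m0 := m0) (μ := μ) hG2 (hG1 _ hA) hA hY'G2 hM0 hY'bd
  have hc0 : 0 ≤ 2 * φ * M := by positivity
  have hb1 := outer_bound (m0 := m0) (μ := μ) hZ1m hY'm hc0 hK0 hM0 hZ10 hZ1K hY'bd hset1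
  have hb2 := outer_bound (m0 := m0) (μ := μ) hZ2m hY'm hc0 hK0 hM0 hZ20 hZ2K hY'bd hset2
  have IZ1Y : Integrable (fun ω => Z1 ω * Y' ω) μ :=
    integrable_of_bdd (m0 := m0) (μ := μ) (hZ1m.mul hY'm) (C := K * M) (fun ω => by
      rw [abs_mul]
      exact mul_le_mul (by rw [abs_of_nonneg (hZ10 ω)]; exact hZ1K ω)
        (hY'bd ω) (abs_nonneg _) hK0)
  have IZ2Y : Integrable (fun ω => Z2 ω * Y' ω) μ :=
    integrable_of_bdd (m0 := m0) (μ := μ) (hZ2m.mul hY'm) (C := K * M) (fun ω => by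
      rw [abs_mul]
      exact mul_le_mul (by rw [abs_of_nonneg (hZ20 ω)]; exact hZ2K ω)
        (hY'bd ω) (abs_nonneg _) hK0)
  have hsplit : ∫ ω, X' ω * Y' ω ∂μ
      = (∫ ω, Z1 ω * Y' ω ∂μ) - ∫ ω, Z2 ω * Y' ω ∂μ := by
    rw [← integral_sub IZ1Y IZ2Y]
    refine integral_congr_ae (Filter.Eventually.of_forall fun ω => ?_)
    show X' ω * Y' ω = Z1 ω * Y' ω - Z2 ω * Y' ω
    rw [hsub ω]; ring
  have habs : |∫ ω, X' ω * Y' ω ∂μ|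
      ≤ (2 * φ * M) * (∫ ω, Z1 ω ∂μ) + (2 * φ * M) * (∫ ω, Z2 ω ∂μ) := by
    have key : ∫ ω, X' ω * Y' ω ∂μ
        = ((∫ ω, Z1 ω * Y' ω ∂μ) - (∫ ω, Z1 ω ∂μ) * ∫ ω, Y' ω ∂μ)
          - ((∫ ω, Z2 ω * Y' ω ∂μ) - (∫ ω, Z2 ω ∂μ) * ∫ ω, Y' ω ∂μ) := by
      rw [hsplit]
      have h12 : (∫ ω, Z1 ω ∂μ) = ∫ ω, Z2 ω ∂μ := sub_eq_zero.mp hZsum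
      rw [h12]
      ring
    rw [key]
    calc |((∫ ω, Z1 ω * Y' ω ∂μ) - (∫ ω, Z1 ω ∂μ) * ∫ ω, Y' ω ∂μ)
          - ((∫ ω, Z2 ω * Y' ω ∂μ) - (∫ ω, Z2 ω ∂μ) * ∫ ω, Y' ω ∂μ)|
        ≤ |(∫ ω, Z1 ω * Y' ω ∂μ) - (∫ ω, Z1 ω ∂μ) * ∫ ω, Y' ω ∂μ|
          + |(∫ ω, Z2 ω * Y' ω ∂μ) - (∫ ω, Z2 ω ∂μ) * ∫ ω, Y' ω ∂μ| := abs_sub _ _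
      _ ≤ (2 * φ * M) * (∫ ω, Z1 ω ∂μ) + (2 * φ * M) * (∫ ω, Z2 ω ∂μ) :=
          add_le_add hb1 hb2
  have hZabs : (∫ ω, Z1 ω ∂μ) + (∫ ω, Z2 ω ∂μ) ≤ K := by
    have e : (∫ ω, Z1 ω ∂μ) + (∫ ω, Z2 ω ∂μ) = ∫ ω, |X' ω| ∂μ := by
      rw [← integral_add IZ1 IZ2]
      refine integral_congr_ae (Filter.Eventually.of_forall fun ω => ?_)
      rw [hZ1def, hZ2def]
      simp only [max_def]
      split_ifs <;> rcases abs_cases (X' ω) with ⟨h, _⟩ | ⟨h, _⟩ <;> simp [h] <;> linarith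
    rw [e]
    calc ∫ ω, |X' ω| ∂μ ≤ ∫ _ω, K ∂μ :=
        integral_mono IX'.abs (integrable_const K) (fun ω => hX'bd ω)
      _ = K := by simp
  rw [hprod]
  refine habs.trans ?_
  have hZ1nn : 0 ≤ ∫ ω, Z1 ω ∂μ := integral_nonneg hZ10
  have hZ2nn : 0 ≤ ∫ ω, Z2 ω ∂μ := integral_nonneg hZ20
  nlinarith [mul_le_mul_of_nonneg_left hZabs hc0]
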